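/- For every p > 0 and τ ≥ 0, the smoothed function L̄_2(ξ) = (1/2)·max(0, ξ² − τ²) + (1/(2p))·log(1 + exp(−p·|ξ² − τ²|)) is differentiable at every ξ ∈ ℝ with derivative L̄_2'(ξ) = ξ · min{1, exp(p·(ξ² − τ²))} / (1 + exp(−p·|ξ² − τ²|)). -/

import Mathlib

lemma softplus_eq (p : ℝ) (hp : 0 < p) (u : ℝ) :
    1 / 2 * max 0 u + 1 / (2 * p) * Real.log (1 + Real.exp (-p * |u|))
      = 1 / (2 * p) * Real.log (1 + Real.exp (p * u)) := by
  rcases le_or_gt 0 u with h | h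
  · rw [abs_of_nonneg h, max_eq_right h]
    have h1 : (1 : ℝ) + Real.exp (p * u)
        = Real.exp (p * u) * (1 + Real.exp (-p * u)) := by
      rw [mul_add, mul_one, ← Real.exp_add]
      ring_nf
      rw [Real.exp_zero]; ring
    rw [h1, Real.log_mul (Real.exp_ne_zero _) (by positivity), Real.log_exp]
    field_simp
  · rw [abs_of_neg h, max_eq_left (le_of_lt (by linarith))]
    ring_nf

theorem smoothed_L2_hasDerivAt
    (p τ : ℝ) (hp : 0 < p) (hτ : 0 ≤ τ)
    (L2bar : ℝ → ℝ)
    (hL2bar : L2bar = fun ξ => 1 / 2 * max 0 (ξ ^ 2 - τ ^ 2)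
      + 1 / (2 * p) * Real.log (1 + Real.exp (-p * |ξ ^ 2 - τ ^ 2|))) :
    ∀ ξ : ℝ, HasDerivAt L2bar
      (ξ * min 1 (Real.exp (p * (ξ ^ 2 - τ ^ 2)))
        / (1 + Real.exp (-p * |ξ ^ 2 - τ ^ 2|))) ξ := by
  intro ξ
  have hfun : L2bar = fun ξ => 1 / (2 * p) * Real.log (1 + Real.exp (p * (ξ ^ 2 - τ ^ 2))) := by
    rw [hL2bar]; funext x; exact softplus_eq p hp _
  rw [hfun]
  set u := ξ ^ 2 - τ ^ 2 with hu
  -- derivative of inner function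
  have h1 : HasDerivAt (fun x : ℝ => p * (x ^ 2 - τ ^ 2)) (p * (2 * ξ)) ξ := by
    have := ((hasDerivAt_pow 2 ξ).sub_const (τ ^ 2)).const_mul p
    simpa using this
  have h2 : HasDerivAt (fun x : ℝ => Real.exp (p * (x ^ 2 - τ ^ 2)))
      (Real.exp (p * u) * (p * (2 * ξ))) ξ := h1.exp
  have h3 : HasDerivAt (fun x : ℝ => 1 + Real.exp (p * (x ^ 2 - τ ^ 2)))
      (Real.exp (p * u) * (p * (2 * ξ))) ξ := h2.const_add 1
  have hpos : (0 : ℝ) < 1 + Real.exp (p * u) := by positivity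
  have h4 : HasDerivAt (fun x : ℝ => Real.log (1 + Real.exp (p * (x ^ 2 - τ ^ 2))))
      (Real.exp (p * u) * (p * (2 * ξ)) / (1 + Real.exp (p * u))) ξ :=
    h3.log (ne_of_gt hpos)
  have h5 := h4.const_mul (1 / (2 * p))
  refine h5.congr_deriv ?_
  symm
  -- show the derivative values agree
  rcases le_or_gt 0 u with h | h
  · rw [abs_of_nonneg h, min_eq_left (Real.one_le_exp (by positivity))]
    rw [neg_mul, Real.exp_neg]
    have he := Real.exp_ne_zero (p * u)
    have hpos2 : (0 : ℝ) < 1 + (Real.exp (p * u))⁻¹ := by positivity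
    field_simp
    ring
  · rw [abs_of_neg h, min_eq_right (Real.exp_le_one_iff.mpr (by nlinarith))]
    have : -p * -u = p * u := by ring
    rw [this]
    field_simp
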